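/- Let H be a finite-dimensional complex inner product space with subspaces H₁,…,Hₙ and orthogonal projections P₁,…,Pₙ. If the system of subspaces (H;H₁,…,Hₙ) is indecomposable as a system in the underlying linear space (every idempotent endomorphism preserving all Hₖ is 0 or I), then the collection of projections P₁,…,Pₙ is irreducible: every operator commuting with all Pₖ is a scalar multiple of the identity. -/

import Mathlib

/-- indecomposability of a system of subspaces of a Hilbert space
implies irreducibility of the family of orthogonal projections. -/
theorem indecomposable_implies_irreducible
    (H : Type*) [NormedAddCommGroup H] [InnerProductSpace ℂ H] [FiniteDimensional ℂ H]
    (n : ℕ) (Hs : Fin n → Submodule ℂ H)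
    (hindec : ∀ R : H →ₗ[ℂ] H, R ∘ₗ R = R → (∀ k, ∀ x ∈ Hs k, R x ∈ Hs k) →
      R = 0 ∨ R = LinearMap.id) :
    ∀ X : H →L[ℂ] H,
      (∀ k, X ∘L ((Hs k).subtypeL ∘L (Hs k).orthogonalProjectionOnto)
          = ((Hs k).subtypeL ∘L (Hs k).orthogonalProjectionOnto) ∘L X) →
      ∃ c : ℂ, X = c • ContinuousLinearMap.id ℂ H := by
  intro X hX
  by_cases hH : Nontrivial H
  case neg =>
    have : Subsingleton H := not_nontrivial_iff_subsingleton.mp hH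
    exact ⟨0, by ext x; exact Subsingleton.elim _ _⟩
  case pos =>
    let f : Module.End ℂ H := X.toLinearMap
    obtain ⟨c, hc⟩ := Module.End.exists_eigenvalue f
    set E := Module.End.eigenspace f c with hEdef
    -- the orthogonal projection onto E, as an endomorphism of H
    let R : H →ₗ[ℂ] H := E.subtype ∘ₗ (E.orthogonalProjectionOnto).toLinearMap
    have hRval : ∀ x : H, R x = (E.orthogonalProjectionOnto x : H) := fun _ => rfl
    have hRE : ∀ x : H, R x ∈ E := fun x => (E.orthogonalProjectionOnto x).2
    have hRfix : ∀ x ∈ E, R x = x := by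
      intro x hx
      have := Submodule.orthogonalProjectionOnto_mem_subspace_eq_self (⟨x, hx⟩ : E)
      simpa [hRval] using congrArg (Subtype.val) this
    have hRidem : R ∘ₗ R = R := by
      ext x
      exact hRfix (R x) (hRE x)
    -- the projections Pₖ preserve E and Eᗮ
    have hPE : ∀ k, ∀ v ∈ E, ((Hs k).subtypeL ∘L (Hs k).orthogonalProjectionOnto) v ∈ E := by
      intro k v hv
      set P := (Hs k).subtypeL ∘L (Hs k).orthogonalProjectionOnto
      have hfv : f v = c • v := Module.End.mem_eigenspace_iff.mp hv
      have hXv : X v = c • v := hfv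
      have hcomm : X (P v) = P (X v) := congrFun (congrArg DFunLike.coe (hX k)) v
      have : X (P v) = c • (P v) := by rw [hcomm, hXv, map_smul]
      exact Module.End.mem_eigenspace_iff.mpr this
    have hPperp : ∀ k, ∀ v ∈ Eᗮ, ((Hs k).subtypeL ∘L (Hs k).orthogonalProjectionOnto) v ∈ Eᗮ := by
      intro k v hv
      set P := (Hs k).subtypeL ∘L (Hs k).orthogonalProjectionOnto with hPdef
      rw [Submodule.mem_orthogonal]
      intro w hw
      have hadj : (inner ℂ (P v) w : ℂ) = inner ℂ v (P w) := by
        simp only [hPdef, ContinuousLinearMap.comp_apply, Submodule.subtypeL_apply]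
        exact Submodule.inner_starProjection_left_eq_right (Hs k) v w
      have hPw : P w ∈ E := hPE k w hw
      have : (inner ℂ v (P w) : ℂ) = 0 := by
        have := (Submodule.mem_orthogonal E v).mp hv (P w) hPw
        simpa [inner_eq_zero_symm] using this
      calc (inner ℂ w (P v) : ℂ) = (starRingEnd ℂ) (inner ℂ (P v) w) := (inner_conj_symm _ _).symm
        _ = (starRingEnd ℂ) (inner ℂ v (P w)) := by rw [hadj]
        _ = 0 := by rw [this]; simp
    -- R preserves each Hₖ
    have hRinv : ∀ k, ∀ x ∈ Hs k, R x ∈ Hs k := by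
      intro k x hx
      set P := (Hs k).subtypeL ∘L (Hs k).orthogonalProjectionOnto with hPdef
      have hPfix : P x = x := by
        have := Submodule.orthogonalProjectionOnto_mem_subspace_eq_self (⟨x, hx⟩ : Hs k)
        simpa [hPdef] using congrArg (Subtype.val) this
      have hPmem : ∀ y : H, P y ∈ Hs k := fun y => ((Hs k).orthogonalProjectionOnto y).2
      have hdecomp : x = R x + (x - R x) := by abel
      have hsub : x - R x ∈ Eᗮ := by
        rw [hRval]; exact Submodule.sub_starProjection_mem_orthogonal x
      have h1 : R (P (R x)) = P (R x) := hRfix _ (hPE k (R x) (hRE x))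
      have h2 : R (P (x - R x)) = 0 := by
        have hmem : P (x - R x) ∈ Eᗮ := hPperp k _ hsub
        have := Submodule.orthogonalProjectionOnto_apply_of_mem_orthogonal hmem
        rw [hRval, this, Submodule.coe_zero]
      have hx1 : P x = P (R x) + P (x - R x) := by rw [← map_add, ← hdecomp]
      have key : R x = P (R x) := by
        calc R x = R (P x) := by rw [hPfix]
          _ = R (P (R x)) + R (P (x - R x)) := by rw [hx1, map_add]
          _ = P (R x) + 0 := by rw [h1, h2]
          _ = P (R x) := add_zero _
      rw [key]; exact hPmem _
    -- apply indecomposability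
    rcases hindec R hRidem hRinv with h0 | hid
    · -- impossible: E ≠ ⊥
      obtain ⟨v, hv⟩ := hc.exists_hasEigenvector
      have hvE : v ∈ E := hv.1
      have hv0 : v ≠ 0 := hv.2
      have : R v = 0 := by rw [h0]; rfl
      rw [hRfix v hvE] at this
      exact absurd this hv0
    · -- R = id means E = ⊤, so X = c • id
      refine ⟨c, ?_⟩
      ext x
      have hxE : x ∈ E := by
        have : R x = x := by rw [hid]; rfl
        rw [← this]; exact hRE x
      have : f x = c • x := Module.End.mem_eigenspace_iff.mp hxE
      rw [ContinuousLinearMap.smul_apply, ContinuousLinearMap.id_apply]; exact this
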